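/- For every n ≥ 1 and every pair of permutations α, β in the symmetric group S_n, #α + #(α⁻¹β) + #(β⁻¹γ) ≤ 2n + 1, where γ is the full cycle (1,2,…,n) and #σ denotes the number of cycles of the permutation σ. -/

import Mathlib

set_option linter.unusedSectionVars false

open Equiv Equiv.Perm Finset

variable {α : Type*} [Fintype α] [DecidableEq α]

private lemma ct_le_sc (f : Perm α) : Multiset.card f.cycleType ≤ f.support.card := by
  rw [← f.sum_cycleType]
  calc Multiset.card f.cycleType = (Multiset.map (fun _ => 1) f.cycleType).sum := by simp
    _ ≤ (Multiset.map id f.cycleType).sum :=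
        Multiset.sum_map_le_sum_map _ _ fun x hx =>
          Nat.one_le_of_lt (two_le_of_mem_cycleType hx)
    _ = f.cycleType.sum := by simp

/-- Key splitting lemma: multiplying on the left by `swap x (f x)` for `x` in the
support splits the cycle containing `x`. -/
private lemma keyS (f : Perm α) {x : α} (hx : f x ≠ x) :
    (Equiv.swap x (f x) * f).support.card + Multiset.card f.cycleType + 1
      = f.support.card + Multiset.card (Equiv.swap x (f x) * f).cycleType := by
  set c := f.cycleOf x with hc
  have hcmem : c ∈ f.cycleFactorsFinset :=
    (cycleOf_mem_cycleFactorsFinset_iff).2 (mem_support.2 hx)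
  have hd : Perm.Disjoint (f * c⁻¹) c := disjoint_mul_inv_of_mem_cycleFactorsFinset hcmem
  set t := f * c⁻¹ with ht
  have hf : f = t * c := by rw [ht]; group
  have hcx : c x = f x := f.cycleOf_apply_self x
  have hcxx : c x ≠ x := by rw [hcx]; exact hx
  have hcyc : c.IsCycle := isCycle_cycleOf f hx
  have hxc : x ∈ c.support := mem_support.2 hcxx
  have hfxc : c x ∈ c.support := apply_mem_support.2 hxc
  set s := Equiv.swap x (f x) with hs
  have hs' : s = Equiv.swap x (c x) := by rw [hs, hcx]
  have hds : Perm.Disjoint t s := by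
    intro a
    rcases hd a with h | h
    · exact Or.inl h
    · right
      have hax : a ≠ x := by rintro rfl; exact hcxx (by rw [h])
      have hafx : a ≠ c x := by rintro rfl; exact (mem_support.1 hfxc) h
      rw [hs', swap_apply_of_ne_of_ne hax hafx]
  have hcycT : f.cycleType = t.cycleType + c.cycleType := by rw [hf, hd.cycleType_mul]
  have hsupp : f.support.card = t.support.card + c.support.card := by
    rw [hf, hd.card_support_mul]
  have hctc : c.cycleType = {c.support.card} := hcyc.cycleType
  by_cases hcc : c (c x) = x
  · -- the cycle of x is a transposition
    have hcswap : c = Equiv.swap x (c x) := hcyc.eq_swap_of_apply_apply_eq_self hcxx hcc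
    have hpi : s * f = t := by
      rw [hf, ← mul_assoc, ← hds.commute.eq, mul_assoc, hs', ← hcswap]
      rw [hcswap, swap_mul_self, mul_one]
    have hscc : c.support.card = 2 := by
      rw [hcswap]; exact card_support_swap (Ne.symm hcxx)
    rw [hpi, hcycT, hctc]
    simp only [Multiset.card_add, Multiset.card_singleton]
    omega
  · -- the cycle of x splits off x
    set c' := Equiv.swap x (c x) * c with hc'
    have hcyc' : c'.IsCycle := hcyc.swap_mul hcxx hcc
    have hsupp' : c'.support = c.support \ {x} := support_swap_mul_eq c x hcc
    have hcard' : c'.support.card + 1 = c.support.card := by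
      rw [hsupp', card_sdiff_of_subset (by simpa using hxc)]
      have : 1 ≤ c.support.card := card_pos.2 ⟨x, hxc⟩
      simp
      omega
    have hdc' : Perm.Disjoint t c' := by
      intro a
      rcases hd a with h | h
      · exact Or.inl h
      · right
        have : a ∉ c'.support := by
          rw [hsupp']
          simp [notMem_support.2 h]
        exact notMem_support.1 this
    have hpi : s * f = t * c' := by
      rw [hf, ← mul_assoc, ← hds.commute.eq, mul_assoc, hs', hc']
    rw [hpi, hdc'.cycleType_mul, hdc'.card_support_mul, hcycT, hctc, hcyc'.cycleType]
    simp only [Multiset.card_add, Multiset.card_singleton, Multiset.coe_card, List.length_singleton]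
    omega

/-- `W f` is the "reflection length" of `f`: support size minus number of
nontrivial cycles. -/
private def W (f : Perm α) : ℕ := f.support.card - Multiset.card f.cycleType

private lemma keyS' (f : Perm α) {x : α} (hx : f x ≠ x) :
    W (Equiv.swap x (f x) * f) + 1 = W f := by
  have h := keyS f hx
  have h1 := ct_le_sc f
  have h2 := ct_le_sc (Equiv.swap x (f x) * f)
  unfold W
  omega

private lemma exists_swap_list (f : Perm α) :
    ∃ l : List (Perm α), (∀ s ∈ l, s.IsSwap) ∧ l.prod = f ∧
      l.length + Multiset.card f.cycleType = f.support.card := by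
  generalize hm : f.support.card = m
  induction m using Nat.strong_induction_on generalizing f with
  | _ m ih =>
  by_cases hf : f = 1
  · refine ⟨[], by simp, by simp [hf], by simp [hf, ← hm]⟩
  · have hx : ∃ x, f x ≠ x := by
      by_contra h
      push_neg at h
      exact hf (Equiv.ext h)
    obtain ⟨x, hx⟩ := hx
    set π := Equiv.swap x (f x) * f with hπ
    have hlt : π.support.card < m := hm ▸ card_support_swap_mul hx
    obtain ⟨l, hl, hprod, hlen⟩ := ih π.support.card hlt π rfl
    rw [hπ] at hlen
    have hfeq : f = Equiv.swap x (f x) * π := by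
      rw [hπ, ← mul_assoc, swap_mul_self, one_mul]
    refine ⟨Equiv.swap x (f x) :: l, ?_, ?_, ?_⟩
    · rintro s hs
      rcases List.mem_cons.1 hs with rfl | hs
      · exact ⟨x, f x, Ne.symm hx, rfl⟩
      · exact hl s hs
    · rw [List.prod_cons, hprod, ← hfeq]
    · have h := keyS f hx
      simp only [List.length_cons]
      omega

private lemma swap3 {y c d : α} (hyc : y ≠ c) (hyd : y ≠ d) (hcd : c ≠ d) :
    Equiv.swap y d * Equiv.swap c d * Equiv.swap y c = Equiv.swap c d := by
  ext a
  simp only [Perm.mul_apply, swap_apply_def]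
  split_ifs <;> simp_all

private lemma W_swap_mul_le (f : Perm α) {c d : α} (hcd : c ≠ d) :
    W (Equiv.swap c d * f) ≤ W f + 1 := by
  generalize hm : f.support.card = m
  induction m using Nat.strong_induction_on generalizing f c d with
  | _ m ih =>
  by_cases h1 : f c = d
  · have hc : f c ≠ c := by rw [h1]; exact Ne.symm hcd
    have := keyS' f hc
    rw [h1] at this
    omega
  by_cases h2 : f d = c
  · have hd : f d ≠ d := by rw [h2]; exact hcd
    have := keyS' f hd
    rw [h2] at this
    rw [swap_comm c d]
    omega
  by_cases h3 : f c = c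
  · set π := Equiv.swap c d * f with hπ
    have hπc : π c = d := by rw [hπ]; simp [h3]
    have hπc' : π c ≠ c := by rw [hπc]; exact Ne.symm hcd
    have := keyS' π hπc'
    rw [hπc] at this
    have hrw : Equiv.swap c d * π = f := by
      rw [hπ, ← mul_assoc, swap_mul_self, one_mul]
    rw [hrw] at this
    omega
  by_cases h4 : f d = d
  · set π := Equiv.swap c d * f with hπ
    have hπd : π d = c := by rw [hπ]; simp [h4]
    have hπd' : π d ≠ d := by rw [hπd]; exact hcd
    have hkey := keyS' π hπd'
    rw [hπd, swap_comm d c] at hkey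
    have hrw : Equiv.swap c d * π = f := by
      rw [hπ, ← mul_assoc, swap_mul_self, one_mul]
    rw [hrw] at hkey
    omega
  · -- generic case: strip a point off the cycle of `c` and use induction
    set y := f⁻¹ c with hy
    have hfy : f y = c := f.apply_symm_apply c
    have hyc : y ≠ c := by rintro h; rw [h] at hfy; exact h3 hfy
    have hyd : y ≠ d := by rintro h; rw [h] at hfy; exact h2 hfy
    have hfyy : f y ≠ y := by rw [hfy]; exact Ne.symm hyc
    set σ₁ := Equiv.swap y c * f with hσ₁
    have hW1 : W σ₁ + 1 = W f := by
      have := keyS' f hfyy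
      rw [hfy] at this
      rwa [← hσ₁] at this
    have hlt : σ₁.support.card < m := by
      have := card_support_swap_mul (f := f) (x := y) hfyy
      rw [hfy, ← hσ₁] at this
      omega
    have hIH : W (Equiv.swap c d * σ₁) ≤ W σ₁ + 1 := ih _ hlt σ₁ hcd rfl
    set ρ := Equiv.swap c d * σ₁ with hρ
    set π := Equiv.swap c d * f with hπ
    have hid : π = Equiv.swap y d * ρ := by
      rw [hπ, hρ, hσ₁]
      rw [show Equiv.swap y d * (Equiv.swap c d * (Equiv.swap y c * f))
            = (Equiv.swap y d * Equiv.swap c d * Equiv.swap y c) * f by group,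
          swap3 hyc hyd hcd]
    have hπy : π y = d := by rw [hπ]; simp [hfy]
    have hπy' : π y ≠ y := by rw [hπy]; exact Ne.symm hyd
    have hkey := keyS' π hπy'
    rw [hπy] at hkey
    have hback : Equiv.swap y d * π = ρ := by
      rw [hid, ← mul_assoc, swap_mul_self, one_mul]
    rw [hback] at hkey
    omega

private lemma W_mul_swap_le (f : Perm α) {c d : α} (hcd : c ≠ d) :
    W (f * Equiv.swap c d) ≤ W f + 1 := by
  rw [mul_swap_eq_swap_mul]
  exact W_swap_mul_le f (f.injective.ne hcd)

private lemma W_mul_list_le (f : Perm α) (l : List (Perm α)) (hl : ∀ s ∈ l, s.IsSwap) :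
    W (f * l.prod) ≤ W f + l.length := by
  induction l generalizing f with
  | nil => simp
  | cons s L ihl =>
    obtain ⟨c, d, hcd, rfl⟩ := hl s (List.mem_cons_self (a := s) (l := L))
    have h1 := ihl (f * Equiv.swap c d) fun t ht => hl t (List.mem_cons_of_mem _ ht)
    have h2 := W_mul_swap_le f hcd
    rw [List.prod_cons, ← mul_assoc]
    simp only [List.length_cons]
    omega

private lemma W_mul_le (f g : Perm α) : W (f * g) ≤ W f + W g := by
  obtain ⟨l, hl, rfl, hlen⟩ := exists_swap_list g
  have h1 := W_mul_list_le f l hl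
  have h2 := ct_le_sc l.prod
  unfold W at *
  omega

/-- The number of cycles of a permutation, counting fixed points as cycles of
length one. -/
def numCycles {n : ℕ} (σ : Equiv.Perm (Fin n)) : ℕ :=
  σ.cycleType.card + (Finset.univ.filter fun x => σ x = x).card

private lemma numCycles_add_W {n : ℕ} (f : Equiv.Perm (Fin n)) :
    numCycles f + W f = n := by
  have h1 : (Finset.univ.filter fun x => f x = x).card + f.support.card = n := by
    have := Finset.card_filter_add_card_filter_not
      (s := (Finset.univ : Finset (Fin n))) (p := fun x => f x = x)
    simpa [Equiv.Perm.support] using this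
  have h2 := ct_le_sc f
  unfold numCycles W
  omega

private lemma W_finRotate {n : ℕ} (hn : 1 ≤ n) : W (finRotate n) + 1 = n := by
  match n, hn with
  | 1, _ => simp [W]
  | (m + 2), _ =>
    have hc : (finRotate (m + 2)).IsCycle := isCycle_finRotate
    rw [W, hc.cycleType, support_finRotate]
    simp

/-- For every `n ≥ 1` and permutations `α, β ∈ S_n`,
`#α + #(α⁻¹β) + #(β⁻¹γ) ≤ 2n + 1`, where `γ = (1, 2, …, n)` is the full cycle
(realized as `finRotate n`). -/
theorem numCycles_triple_le (n : ℕ) (hn : 1 ≤ n) (α β : Equiv.Perm (Fin n)) :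
    numCycles α + numCycles (α⁻¹ * β) + numCycles (β⁻¹ * finRotate n) ≤ 2 * n + 1 := by
  have hγ : α * (α⁻¹ * β) * (β⁻¹ * finRotate n) = finRotate n := by group
  have h1 : W (finRotate n) ≤ W α + W (α⁻¹ * β) + W (β⁻¹ * finRotate n) := by
    calc W (finRotate n) = W (α * (α⁻¹ * β) * (β⁻¹ * finRotate n)) := by rw [hγ]
      _ ≤ W (α * (α⁻¹ * β)) + W (β⁻¹ * finRotate n) := W_mul_le _ _
      _ ≤ W α + W (α⁻¹ * β) + W (β⁻¹ * finRotate n) := by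
          have := W_mul_le α (α⁻¹ * β); omega
  have h2 := numCycles_add_W α
  have h3 := numCycles_add_W (α⁻¹ * β)
  have h4 := numCycles_add_W (β⁻¹ * finRotate n)
  have h5 := W_finRotate hn
  omega
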